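/- Let b ∈ ℝ with b ≠ 0 and let 0 < q < 2. If φ > 0 satisfies the stationarity equation φ + (|b|/2)·(φ/(|b|/2))^(q−1) = |b|, then φ ≤ |b|/2. (That is, |b|/2 is the largest positive solution of the stationarity equation when ω = |b|/2, and it is always a solution.) -/

import Mathlib

/-- For `b ≠ 0` and `0 < q < 2`: if `φ > 0` satisfies the stationarity equation
`φ + (|b|/2)·(φ/(|b|/2))^(q−1) = |b|`, then `φ ≤ |b|/2`. Powers are real
powers (`rpow`). -/
theorem stationary_le_half_b (b q φ : ℝ) (hb : b ≠ 0) (hq0 : 0 < q) (hq2 : q < 2)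
    (hφ : 0 < φ)
    (heq : φ + (|b| / 2) * (φ / (|b| / 2)) ^ (q - 1) = |b|) :
    φ ≤ |b| / 2 := by
  set ω : ℝ := |b| / 2 with hω_def
  have hω : 0 < ω := by
    have : 0 < |b| := abs_pos.mpr hb
    positivity
  by_contra h
  push_neg at h
  set t : ℝ := φ / ω with ht_def
  have ht : 1 < t := (one_lt_div hω).mpr h
  have h1 : t⁻¹ ≤ t ^ (q - 1) := by
    rw [← Real.rpow_neg_one]
    exact Real.rpow_le_rpow_of_exponent_le ht.le (by linarith)
  have h2 : 2 - t < t⁻¹ := by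
    rw [inv_eq_one_div, lt_div_iff₀ (by linarith : (0:ℝ) < t)]
    nlinarith [sq_nonneg (t - 1)]
  have hφt : φ = ω * t := by rw [ht_def]; field_simp
  have habs : |b| = 2 * ω := by rw [hω_def]; ring
  have hX : 2 - t < t ^ (q - 1) := lt_of_lt_of_le h2 h1
  rw [habs, hφt] at heq
  nlinarith [mul_lt_mul_of_pos_left hX hω]
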